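/- Let s, t ∈ ℕ with t even, and let G be the 2-regular simple graph consisting of the disjoint union of t/2 copies of the complete bipartite graph K_{2,2} and s copies of the triangle K_3, so that G has n = 2t + 3s vertices and n edges. Then there exists an ordering σ of the vertices of G such that SVC_G(σ) ≤ t² + 3st + (5/2)s² + n (all edge weights equal to 1). -/
import Mathlib


attribute [local instance] Classical.propDecidable

/-- The disjoint union of `k` copies of the complete bipartite graph `K_{2,2}` (on vertex
classes `{0,1}` and `{2,3}` of `Fin 4`) and `s` copies of the triangle `K₃`. -/
def clusterGraph (k s : ℕ) : SimpleGraph ((Fin k × Fin 4) ⊕ (Fin s × Fin 3)) :=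
  SimpleGraph.fromRel (fun x y =>
    match x, y with
    | Sum.inl (c, i), Sum.inl (c', i') => c = c' ∧ (i : ℕ) < 2 ∧ 2 ≤ (i' : ℕ)
    | Sum.inr (c, _), Sum.inr (c', _) => c = c'
    | _, _ => False)

/-- The position (in `{1, …, n}`) at which vertex `v` is visited by the ordering `σ`. -/
def vertexPos {V : Type*} [Fintype V] (σ : Fin (Fintype.card V) ≃ V) (v : V) : ℕ :=
  (σ.symm v : ℕ) + 1

/-- The cover time of an edge `e : Sym2 V`: the earliest position of one of its endpoints. -/
def edgeCoverTime {V : Type*} [Fintype V] (σ : Fin (Fintype.card V) ≃ V) : Sym2 V → ℕ :=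
  Sym2.lift ⟨fun u w => min (vertexPos σ u) (vertexPos σ w), fun _ _ => min_comm _ _⟩

namespace ClusterAux

/-- The position of each vertex in our chosen ordering. -/
def pos (k s : ℕ) : (Fin k × Fin 4) ⊕ (Fin s × Fin 3) → ℕ
  | Sum.inl (c, i) => if (i : ℕ) < 2 then 2 * c + i else 2 * k + 2 * s + 2 * c + ((i : ℕ) - 2)
  | Sum.inr (c, j) =>
      if (j : ℕ) = 0 then 2 * k + c
      else if (j : ℕ) = 1 then 2 * k + s + c else 4 * k + 2 * s + c

lemma pos_lt (k s : ℕ) (v : (Fin k × Fin 4) ⊕ (Fin s × Fin 3)) :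
    pos k s v < 4 * k + 3 * s := by
  rcases v with ⟨c, i⟩ | ⟨c, j⟩
  · have hc := c.isLt; have hi := i.isLt
    simp only [pos]; split_ifs <;> omega
  · have hc := c.isLt; have hj := j.isLt
    simp only [pos]; split_ifs <;> omega

lemma pos_injective (k s : ℕ) : Function.Injective (pos k s) := by
  rintro (⟨c, i⟩ | ⟨c, j⟩) (⟨c', i'⟩ | ⟨c', j'⟩) h <;>
    simp only [pos] at h <;>
    have hc := c.isLt <;> have hc' := c'.isLt
  · have hi := i.isLt; have hi' := i'.isLt
    split_ifs at h <;>
      (simp only [Sum.inl.injEq, Prod.mk.injEq, Fin.ext_iff]; omega)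
  · have hi := i.isLt; have hj' := j'.isLt
    exfalso; split_ifs at h <;> omega
  · have hj := j.isLt; have hi' := i'.isLt
    exfalso; split_ifs at h <;> omega
  · have hj := j.isLt; have hj' := j'.isLt
    split_ifs at h <;>
      (simp only [Sum.inr.injEq, Prod.mk.injEq, Fin.ext_iff]; omega)

lemma card_V (k s : ℕ) : Fintype.card ((Fin k × Fin 4) ⊕ (Fin s × Fin 3)) = 4 * k + 3 * s := by
  simp only [Fintype.card_sum, Fintype.card_prod, Fintype.card_fin]; ring

/-- The ordering: first one side of each `K_{2,2}`, then the first vertices of the triangles,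
then the second vertices of the triangles, then everything else. -/
noncomputable def ordering (k s : ℕ) :
    Fin (Fintype.card ((Fin k × Fin 4) ⊕ (Fin s × Fin 3))) ≃ ((Fin k × Fin 4) ⊕ (Fin s × Fin 3)) :=
  (Equiv.ofBijective
    (fun v => (⟨pos k s v, by rw [card_V]; exact pos_lt k s v⟩ :
      Fin (Fintype.card ((Fin k × Fin 4) ⊕ (Fin s × Fin 3)))))
    (by
      refine (Fintype.bijective_iff_injective_and_card _).2 ⟨?_, by simp⟩
      intro a b hab
      exact pos_injective k s (by simpa [Fin.ext_iff] using hab))).symm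

lemma vertexPos_ordering (k s : ℕ) (v : (Fin k × Fin 4) ⊕ (Fin s × Fin 3)) :
    vertexPos (ordering k s) v = pos k s v + 1 := by
  simp [vertexPos, ordering, Equiv.ofBijective]

lemma ect (k s : ℕ) (u w : (Fin k × Fin 4) ⊕ (Fin s × Fin 3)) :
    edgeCoverTime (ordering k s) s(u, w) = min (pos k s u + 1) (pos k s w + 1) := by
  simp [edgeCoverTime, vertexPos_ordering]

/-- Enumeration of the edges of `clusterGraph k s`. -/
def edgeOf (k s : ℕ) :
    (Fin k × Fin 2 × Fin 2) ⊕ (Fin s × Fin 3) → Sym2 ((Fin k × Fin 4) ⊕ (Fin s × Fin 3))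
  | Sum.inl (c, a, b) =>
      s(Sum.inl (c, (⟨(a : ℕ), by have := a.isLt; omega⟩ : Fin 4)),
        Sum.inl (c, (⟨(b : ℕ) + 2, by have := b.isLt; omega⟩ : Fin 4)))
  | Sum.inr (c, j) => s(Sum.inr (c, j), Sum.inr (c, j + 1))

lemma edgeOf_injective (k s : ℕ) : Function.Injective (edgeOf k s) := by
  rintro (⟨c, a, b⟩ | ⟨c, j⟩) (⟨c', a', b'⟩ | ⟨c', j'⟩) h
  · have ha := a.isLt; have hb := b.isLt; have ha' := a'.isLt; have hb' := b'.isLt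
    simp only [edgeOf, Sym2.eq, Sym2.rel_iff', Prod.mk.injEq, Prod.swap_prod_mk,
      Sum.inl.injEq, Fin.ext_iff] at h
    simp only [Sum.inl.injEq, Prod.mk.injEq, Fin.ext_iff]
    omega
  · simp only [edgeOf, Sym2.eq, Sym2.rel_iff', Prod.mk.injEq, Prod.swap_prod_mk] at h
    simp_all
  · simp only [edgeOf, Sym2.eq, Sym2.rel_iff', Prod.mk.injEq, Prod.swap_prod_mk] at h
    simp_all
  · have hj := j.isLt; have hj' := j'.isLt
    simp only [edgeOf, Sym2.eq, Sym2.rel_iff', Prod.mk.injEq, Prod.swap_prod_mk,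
      Sum.inr.injEq, Fin.ext_iff, Fin.val_add, Fin.val_one] at h
    simp only [Sum.inr.injEq, Prod.mk.injEq, Fin.ext_iff]
    omega

lemma edgeOf_mem (k s : ℕ) (i : (Fin k × Fin 2 × Fin 2) ⊕ (Fin s × Fin 3)) :
    edgeOf k s i ∈ (clusterGraph k s).edgeSet := by
  rcases i with ⟨c, a, b⟩ | ⟨c, j⟩
  · have ha := a.isLt; have hb := b.isLt
    simp only [edgeOf, SimpleGraph.mem_edgeSet, clusterGraph, SimpleGraph.fromRel_adj]
    refine ⟨?_, Or.inl ⟨trivial, by omega, by omega⟩⟩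
    simp only [Ne, Sum.inl.injEq, Prod.mk.injEq, Fin.ext_iff]
    omega
  · have hj := j.isLt
    simp only [edgeOf, SimpleGraph.mem_edgeSet, clusterGraph, SimpleGraph.fromRel_adj]
    refine ⟨?_, Or.inl trivial⟩
    simp only [Ne, Sum.inr.injEq, Prod.mk.injEq, Fin.ext_iff, Fin.val_add, Fin.val_one]
    omega

lemma edgeFinset_eq (k s : ℕ) :
    (clusterGraph k s).edgeFinset = Finset.image (edgeOf k s) Finset.univ := by
  ext e
  induction e using Sym2.ind with
  | _ x y =>
    simp only [SimpleGraph.mem_edgeFinset, Finset.mem_image, Finset.mem_univ, true_and]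
    constructor
    · intro h
      rw [SimpleGraph.mem_edgeSet] at h
      rcases x with ⟨c, i⟩ | ⟨c, j⟩ <;> rcases y with ⟨c', i'⟩ | ⟨c', j'⟩ <;>
        rw [clusterGraph, SimpleGraph.fromRel_adj] at h
      · obtain ⟨hne, hrel⟩ := h
        have hi := i.isLt; have hi' := i'.isLt
        rcases hrel with ⟨rfl, h1, h2⟩ | ⟨rfl, h1, h2⟩
        · exact ⟨Sum.inl (c, ⟨(i : ℕ), h1⟩, ⟨(i' : ℕ) - 2, by omega⟩), by
            simp only [edgeOf, Sym2.eq, Sym2.rel_iff', Prod.mk.injEq, Prod.swap_prod_mk,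
              Sum.inl.injEq, Fin.ext_iff, true_and]
            omega⟩
        · exact ⟨Sum.inl (c', ⟨(i' : ℕ), h1⟩, ⟨(i : ℕ) - 2, by omega⟩), by
            simp only [edgeOf, Sym2.eq, Sym2.rel_iff', Prod.mk.injEq, Prod.swap_prod_mk,
              Sum.inl.injEq, Fin.ext_iff, true_and]
            omega⟩
      · exact absurd h.2 (by simp)
      · exact absurd h.2 (by simp)
      · obtain ⟨hne, hrel⟩ := h
        have hcc : c = c' := by rcases hrel with h | h; exact h; exact h.symm
        subst hcc
        have hjj : j ≠ j' := by simpa using hne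
        refine ⟨Sum.inr (c, if (j' : ℕ) = ((j : ℕ) + 1) % 3 then j else j'), ?_⟩
        have hj := j.isLt; have hj' := j'.isLt
        have hjj' : (j : ℕ) ≠ (j' : ℕ) := fun hv => hjj (Fin.ext hv)
        split_ifs with hcase <;>
          · simp only [edgeOf, Sym2.eq, Sym2.rel_iff', Prod.mk.injEq, Prod.swap_prod_mk,
              Sum.inr.injEq, Fin.ext_iff, Fin.val_add, Fin.val_one, true_and]
            omega
    · rintro ⟨i, hi⟩
      rw [SimpleGraph.mem_edgeSet, ← SimpleGraph.mem_edgeSet, ← hi]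
      exact edgeOf_mem k s i

lemma ct_inl (k s : ℕ) (c : Fin k) (a b : Fin 2) :
    edgeCoverTime (ordering k s) (edgeOf k s (Sum.inl (c, a, b))) ≤ 2 * c + 2 := by
  have ha := a.isLt; have hb := b.isLt
  simp only [edgeOf, ect, pos]
  split_ifs <;> omega

lemma ct_inr (k s : ℕ) (c : Fin s) (j : Fin 3) :
    edgeCoverTime (ordering k s) (edgeOf k s (Sum.inr (c, j))) ≤
      2 * k + c + 1 + (if (j : ℕ) = 1 then s else 0) := by
  have hj := j.isLt; have hc := c.isLt
  simp only [edgeOf, ect, pos, Fin.val_add, Fin.val_one]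
  split_ifs <;> omega

lemma total_bound (k s : ℕ) :
    ∑ e ∈ (clusterGraph k s).edgeFinset, edgeCoverTime (ordering k s) e
      ≤ 4 * k ^ 2 + 4 * k + 6 * k * s + 3 * (∑ i ∈ Finset.range s, i) + 3 * s + s ^ 2 := by
  rw [edgeFinset_eq, Finset.sum_image (fun x _ y _ h => edgeOf_injective k s h),
    Fintype.sum_sum_type]
  have hgauss : (∑ i ∈ Finset.range k, i) * 2 = k * (k - 1) := Finset.sum_range_id_mul_two k
  have hk2 : k * (k - 1) + k = k ^ 2 := by
    cases k with
    | zero => simp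
    | succ n => simp only [Nat.succ_sub_one]; ring
  have h1 : (∑ x : Fin k × Fin 2 × Fin 2, edgeCoverTime (ordering k s) (edgeOf k s (Sum.inl x)))
      ≤ 8 * (∑ i ∈ Finset.range k, i) + 8 * k := by
    refine le_trans (Finset.sum_le_sum (fun x _ => ct_inl k s x.1 x.2.1 x.2.2)) ?_
    rw [Fintype.sum_prod_type,
      Fin.sum_univ_eq_sum_range (fun i => ∑ _y : Fin 2 × Fin 2, (2 * i + 2)) k]
    have : ∀ i : ℕ, (∑ _y : Fin 2 × Fin 2, (2 * i + 2)) = 8 * i + 8 := by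
      intro i
      simp only [Finset.sum_const, Finset.card_univ, Fintype.card_prod, Fintype.card_fin,
        smul_eq_mul]
      ring
    rw [Finset.sum_congr rfl fun i _ => this i, Finset.sum_add_distrib, ← Finset.mul_sum,
      Finset.sum_const, Finset.card_range, smul_eq_mul]
    omega
  have h2 : (∑ x : Fin s × Fin 3, edgeCoverTime (ordering k s) (edgeOf k s (Sum.inr x)))
      ≤ 6 * k * s + 3 * (∑ i ∈ Finset.range s, i) + 3 * s + s ^ 2 := by
    refine le_trans (Finset.sum_le_sum (fun x _ => ct_inr k s x.1 x.2)) ?_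
    rw [Fintype.sum_prod_type,
      Fin.sum_univ_eq_sum_range
        (fun i => ∑ j : Fin 3, (2 * k + i + 1 + if (j : ℕ) = 1 then s else 0)) s]
    have : ∀ i : ℕ, (∑ j : Fin 3, (2 * k + i + 1 + if (j : ℕ) = 1 then s else 0))
        = 6 * k + 3 * i + 3 + s := by
      intro i
      rw [Fin.sum_univ_three]
      norm_num
      omega
    rw [Finset.sum_congr rfl fun i _ => this i]
    have hsplit : (∑ i ∈ Finset.range s, (6 * k + 3 * i + 3 + s))
        = s * (6 * k + 3 + s) + 3 * (∑ i ∈ Finset.range s, i) := by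
      rw [Finset.sum_congr rfl
          (fun i _ => show 6 * k + 3 * i + 3 + s = (6 * k + 3 + s) + 3 * i by ring),
        Finset.sum_add_distrib, Finset.sum_const, Finset.card_range, smul_eq_mul, ← Finset.mul_sum]
    rw [hsplit]; nlinarith [Finset.sum_range_id_mul_two s]
  have := Nat.add_le_add h1 h2
  refine le_trans this ?_
  have h8 : 8 * (∑ i ∈ Finset.range k, i) + 8 * k ≤ 4 * k ^ 2 + 4 * k := by
    nlinarith [hgauss, hk2]
  omega

end ClusterAux

/-- Let `t` be even and let `G` be the `2`-regular graph consisting of `t/2`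
disjoint copies of `K_{2,2}` and `s` disjoint copies of `K₃`, so that `G` has `n = 2t + 3s`
vertices and `n` edges.  Then some ordering `σ` satisfies
`SVC_G(σ) = Σ_e c_{σ,e} ≤ t² + 3st + (5/2)s² + n`. -/
theorem clusterGraph_svc_upper_bound (t s : ℕ) (ht : Even t) :
    ∃ σ : Fin (Fintype.card ((Fin (t / 2) × Fin 4) ⊕ (Fin s × Fin 3))) ≃
        ((Fin (t / 2) × Fin 4) ⊕ (Fin s × Fin 3)),
      ∑ e ∈ (clusterGraph (t / 2) s).edgeFinset, (edgeCoverTime σ e : ℝ) ≤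
        (t : ℝ) ^ 2 + 3 * (s : ℝ) * (t : ℝ) + 5 / 2 * (s : ℝ) ^ 2 +
          (2 * (t : ℝ) + 3 * (s : ℝ)) := by
  obtain ⟨m, rfl⟩ := ht
  have hk : (m + m) / 2 = m := by omega
  rw [hk]
  refine ⟨ClusterAux.ordering m s, ?_⟩
  rw [← Nat.cast_sum]
  have hN := ClusterAux.total_bound m s
  have h6 : 6 * (∑ i ∈ Finset.range s, i) + 3 * s = 3 * s ^ 2 := by
    have h1 := Finset.sum_range_id_mul_two s
    have h2 : s * (s - 1) + s = s ^ 2 := by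
      cases s with
      | zero => simp
      | succ n => simp only [Nat.succ_sub_one]; ring
    nlinarith
  have hNR : ((∑ e ∈ (clusterGraph m s).edgeFinset,
        edgeCoverTime (ClusterAux.ordering m s) e : ℕ) : ℝ)
      ≤ 4 * (m : ℝ) ^ 2 + 4 * m + 6 * m * s
        + 3 * ((∑ i ∈ Finset.range s, i : ℕ) : ℝ) + 3 * s + s ^ 2 := by
    exact_mod_cast hN
  have h6R : 6 * ((∑ i ∈ Finset.range s, i : ℕ) : ℝ) + 3 * s = 3 * s ^ 2 := by
    exact_mod_cast h6
  have hmm : ((m + m : ℕ) : ℝ) = 2 * (m : ℝ) := by push_cast; ring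
  rw [hmm]
  nlinarith [hNR, h6R]
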